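/- Let 𝕂 be ℝ or ℂ, let 𝒜 be an algebra with identity 1 over 𝕂, let τ ∈ 𝒜, and let a : ℕ → 𝕂 be a sequence. Then for each m ∈ ℕ with m ≥ 1 and each n ∈ ℕ, one has (∑_{k=0}^{n} a(n−k) τ^k)·(1 − τ)^m = (−1)^m ∑_{k=0}^{n+m} (Δ^m a)(n+m−k) τ^k + ∑_{j=0}^{m−1} (−1)^j (Δ^j a)(n+j+1) (1 − τ)^{m−1−j}. -/

import Mathlib

/-- The difference operator on sequences in `𝕜`: `(Δa)(0) = a(0)` and
`(Δa)(n) = a(n) − a(n−1)` for `n ≥ 1`. -/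
def dSeqK {𝕜 : Type*} [RCLike 𝕜] (a : ℕ → 𝕜) : ℕ → 𝕜 := fun n =>
  match n with
  | 0 => a 0
  | n + 1 => a (n + 1) - a n

lemma key {𝕜 : Type*} [RCLike 𝕜] {A : Type*} [Ring A] [Algebra 𝕜 A]
    (τ : A) (a : ℕ → 𝕜) (n : ℕ) :
    (∑ k ∈ Finset.range (n + 1), a (n - k) • τ ^ k) * (1 - τ) =
      (-1 : 𝕜) • (∑ k ∈ Finset.range (n + 2), dSeqK a (n + 1 - k) • τ ^ k)
        + a (n + 1) • (1 : A) := by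
  induction n with
  | zero =>
    simp only [Finset.sum_range_succ, Finset.sum_range_zero, zero_add, pow_zero, pow_one,
      Nat.sub_self, Nat.sub_zero, dSeqK, smul_mul_assoc, one_mul, mul_one]
    module
  | succ n ih =>
    have h1 : ∑ k ∈ Finset.range (n + 2), a (n + 1 - k) • τ ^ k
        = (∑ k ∈ Finset.range (n + 1), a (n - k) • τ ^ k) * τ + a (n + 1) • 1 := by
      rw [Finset.sum_range_succ', Finset.sum_mul]
      simp [pow_succ, smul_mul_assoc, Nat.succ_sub_succ]
    have h2 : ∑ k ∈ Finset.range (n + 3), dSeqK a (n + 2 - k) • τ ^ k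
        = (∑ k ∈ Finset.range (n + 2), dSeqK a (n + 1 - k) • τ ^ k) * τ
          + dSeqK a (n + 2) • 1 := by
      rw [Finset.sum_range_succ', Finset.sum_mul]
      simp [pow_succ, smul_mul_assoc, Nat.succ_sub_succ]
    rw [h1, h2, add_mul, smul_mul_assoc, one_mul]
    have h3 : (∑ k ∈ Finset.range (n + 1), a (n - k) • τ ^ k) * τ * (1 - τ)
        = ((∑ k ∈ Finset.range (n + 1), a (n - k) • τ ^ k) * (1 - τ)) * τ := by
      rw [mul_assoc, mul_assoc, mul_one_sub, one_sub_mul]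
    rw [h3, ih, add_mul, smul_mul_assoc, smul_mul_assoc, one_mul]
    have h4 : dSeqK a (n + 2) = a (n + 2) - a (n + 1) := rfl
    rw [h4]
    module


/-- Lemma 6.4: let `𝕜` be `ℝ` or `ℂ`, let `𝒜` be an algebra with identity over `𝕜`,
`τ ∈ 𝒜`, and `a : ℕ → 𝕜`.  Then for each `m ≥ 1` and each `n ∈ ℕ`,
`(∑_{k=0}^{n} a(n−k) τ^k)(1 − τ)^m
  = (−1)^m ∑_{k=0}^{n+m} (Δ^m a)(n+m−k) τ^k
    + ∑_{j=0}^{m−1} (−1)^j (Δ^j a)(n+j+1) (1 − τ)^{m−1−j}`. -/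
theorem stmt16 {𝕜 : Type*} [RCLike 𝕜] {A : Type*} [Ring A] [Algebra 𝕜 A]
    (τ : A) (a : ℕ → 𝕜) (m : ℕ) (hm : 1 ≤ m) (n : ℕ) :
    (∑ k ∈ Finset.range (n + 1), a (n - k) • τ ^ k) * (1 - τ) ^ m =
      ((-1 : 𝕜) ^ m) •
          (∑ k ∈ Finset.range (n + m + 1), ((dSeqK (𝕜 := 𝕜))^[m] a) (n + m - k) • τ ^ k) +
        ∑ j ∈ Finset.range m,
          ((-1 : 𝕜) ^ j * ((dSeqK (𝕜 := 𝕜))^[j] a) (n + j + 1)) • (1 - τ) ^ (m - 1 - j) := by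
  induction m, hm using Nat.le_induction with
  | base =>
    simpa [Function.iterate_one] using key τ a n
  | succ m hm ih =>
    rw [pow_succ, ← mul_assoc, ih, add_mul, smul_mul_assoc]
    have hk := key τ ((dSeqK (𝕜 := 𝕜))^[m] a) (n + m)
    rw [← Function.iterate_succ_apply' dSeqK m a] at hk
    rw [hk, Finset.sum_mul]
    have hT : (∑ k ∈ Finset.range (n + (m+1) + 1), (dSeqK (𝕜 := 𝕜))^[m+1] a (n + (m+1) - k) • τ ^ k)
        = ∑ k ∈ Finset.range (n + m + 2), (dSeqK (𝕜 := 𝕜))^[m+1] a (n + m + 1 - k) • τ ^ k := rfl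
    have he : ∀ j ∈ Finset.range m,
        (((-1 : 𝕜) ^ j * ((dSeqK (𝕜 := 𝕜))^[j] a) (n + j + 1)) • (1 - τ) ^ (m - 1 - j)) * (1 - τ)
        = ((-1 : 𝕜) ^ j * ((dSeqK (𝕜 := 𝕜))^[j] a) (n + j + 1)) • (1 - τ) ^ (m + 1 - 1 - j) := by
      intro j hj
      rw [Finset.mem_range] at hj
      rw [smul_mul_assoc, ← pow_succ]
      congr 2
      omega
    rw [Finset.sum_congr rfl he, hT, smul_add, smul_smul, smul_smul, ← pow_succ]
    rw [Finset.sum_range_succ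
      (fun j => ((-1 : 𝕜) ^ j * ((dSeqK (𝕜 := 𝕜))^[j] a) (n + j + 1)) • (1 - τ) ^ (m + 1 - 1 - j)) m]
    have h0 : m + 1 - 1 - m = 0 := by omega
    rw [h0, pow_zero]
    abel
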